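/- Let H be a group, Σ ≤ H, and H ↷ X a highly transitive action on an infinite set X such that the restriction Σ ↷ X has infinitely many orbits. Then Σ is highly core-free with respect to H ↷ X. -/
import Mathlib


/-- The Σ-orbit of a point: {σ • z : σ ∈ A}. -/
def subOrbit {H X : Type*} [Group H] [MulAction H X] (A : Subgroup H) (z : X) : Set X :=
  {y | ∃ σ ∈ A, y = σ • z}

/-- The set ΣF = {σ • f : σ ∈ A, f ∈ F}. -/
def subProd {H X : Type*} [Group H] [MulAction H X] (A : Subgroup H) (F : Set X) : Set X :=
  {y | ∃ σ ∈ A, ∃ f ∈ F, y = σ • f}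

/-- `A` is highly core-free with respect to the action `H ↷ X`: for all `k ≥ 2`, all
pairwise distinct `x₁,…,x_k ∈ X` and all finite `F ⊆ X`, some `h ∈ H` sends each `xᵢ`
outside `ΣF` with the sets `Σ(h•xᵢ)` pairwise disjoint. -/
def HighlyCoreFreeWrt {H X : Type*} [Group H] [MulAction H X] (A : Subgroup H) : Prop :=
  ∀ k : ℕ, 2 ≤ k → ∀ x : Fin k → X, Function.Injective x → ∀ F : Set X, F.Finite →
    ∃ h : H, (∀ i, h • x i ∉ subProd A F) ∧
      ∀ i j, i ≠ j → Disjoint (subOrbit A (h • x i)) (subOrbit A (h • x j))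

/-- An action is highly transitive if it is n-transitive for every n. -/
def HighlyTransitive {H X : Type*} [Group H] [MulAction H X] : Prop :=
  ∀ n : ℕ, ∀ x y : Fin n → X, Function.Injective x → Function.Injective y →
    ∃ g : H, ∀ i, g • x i = y i


lemma mem_subOrbit_self {H X : Type*} [Group H] [MulAction H X] (A : Subgroup H) (z : X) :
    z ∈ subOrbit A z := ⟨1, A.one_mem, (one_smul H z).symm⟩

lemma subOrbit_eq_of_mem {H X : Type*} [Group H] [MulAction H X] (A : Subgroup H) {y z : X}
    (h : y ∈ subOrbit A z) : subOrbit A y = subOrbit A z := by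
  obtain ⟨σ, hσ, rfl⟩ := h
  ext w
  constructor
  · rintro ⟨τ, hτ, rfl⟩
    exact ⟨τ * σ, A.mul_mem hτ hσ, (mul_smul τ σ z).symm⟩
  · rintro ⟨τ, hτ, rfl⟩
    refine ⟨τ * σ⁻¹, A.mul_mem hτ (A.inv_mem hσ), ?_⟩
    rw [mul_smul, inv_smul_smul]

lemma subOrbit_disjoint {H X : Type*} [Group H] [MulAction H X] (A : Subgroup H) {a b : X}
    (h : subOrbit A a ≠ subOrbit A b) : Disjoint (subOrbit A a) (subOrbit A b) := by
  rw [Set.disjoint_left]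
  intro w hwa hwb
  exact h ((subOrbit_eq_of_mem A hwa).symm.trans (subOrbit_eq_of_mem A hwb))

/-- If `H ↷ X` is highly transitive and `A ↷ X` has infinitely many orbits, then
`A` is highly core-free w.r.t. `H ↷ X`. -/
theorem highlyTransitive_hcfWrt {H X : Type*} [Group H] [MulAction H X] [Infinite X]
    (A : Subgroup H) (hht : HighlyTransitive (H := H) (X := X))
    (horb : Set.Infinite (Set.range fun z : X => subOrbit A z)) :
    HighlyCoreFreeWrt (X := X) A := by
  intro k _ x hx F hF
  have hS : (Set.range (fun z : X => subOrbit A z) \ (subOrbit A '' F)).Infinite :=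
    horb.diff (hF.image _)
  set e := hS.natEmbedding with he
  -- pick representatives
  have hrep : ∀ n : ℕ, ∃ z : X, subOrbit A z = (e n : Set X) := by
    intro n
    obtain ⟨z, hz⟩ := (e n).2.1
    exact ⟨z, hz⟩
  choose z hz using hrep
  have hznot : ∀ n : ℕ, (e n : Set X) ∉ subOrbit A '' F := fun n => (e n).2.2
  set y : Fin k → X := fun i => z i.val with hy
  have hyinj : Function.Injective y := by
    intro i j hij
    have : (e i.val : Set X) = e j.val := by
      rw [← hz i.val, ← hz j.val]; exact congrArg (subOrbit A) hij
    have := e.injective (Subtype.ext this)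
    exact Fin.ext this
  obtain ⟨g, hg⟩ := hht k x y hx hyinj
  refine ⟨g, ?_, ?_⟩
  · intro i hmem
    rw [hg i] at hmem
    obtain ⟨σ, hσ, f, hf, hyf⟩ := hmem
    have : subOrbit A (y i) = subOrbit A f :=
      subOrbit_eq_of_mem A ⟨σ, hσ, hyf⟩
    exact hznot i.val (⟨f, hf, (hz i.val ▸ this).symm⟩)
  · intro i j hij
    rw [hg i, hg j]
    apply subOrbit_disjoint
    intro h
    rw [show y i = z i.val from rfl, show y j = z j.val from rfl, hz i.val, hz j.val] at h
    exact hij (Fin.ext (e.injective (Subtype.ext h)))
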